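/- For every real z: if |z| ≤ 2 then |sinc z| ≤ 1 − z²/12, and if |z| > 2 then |sinc z| ≤ 1/2. -/

import Mathlib

/-- The cardinal sine function: `sinc z = sin z / z` for `z ≠ 0`, `sinc 0 = 1`. -/
noncomputable def sinc (x : ℝ) : ℝ := if x = 0 then 1 else Real.sin x / x

lemma sin_le_key {x : ℝ} (hx : 0 < x) (hx2 : x ≤ 2) :
    Real.sin x ≤ x - x ^ 3 / 12 := by
  set u := x / 4 with hu
  have hu0 : 0 < u := by positivity
  have hu1 : u ≤ 1 / 2 := by simp [hu]; linarith
  have hs : u - u ^ 3 / 4 < Real.sin u := by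
    have := Real.sin_gt_sub_cube hu0
    linarith [pow_pos hu0 3]
  have hsx : Real.sin (2 * u) ≤ 2 * u := Real.sin_le (by linarith)
  have hsnn : 0 ≤ Real.sin (2 * u) :=
    Real.sin_nonneg_of_nonneg_of_le_pi (by linarith) (by linarith [Real.pi_gt_three])
  have hcos : Real.cos (2 * u) = 1 - 2 * Real.sin u ^ 2 := by
    rw [Real.cos_two_mul]
    nlinarith [Real.sin_sq_add_cos_sq u]
  have hcnn : 0 ≤ Real.cos (2 * u) :=
    Real.cos_nonneg_of_mem_Icc ⟨by linarith [Real.pi_gt_three], by linarith [Real.pi_gt_three]⟩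
  have hxu : x = 2 * (2 * u) := by rw [hu]; ring
  have hsin : Real.sin x = 2 * Real.sin (2 * u) * Real.cos (2 * u) := by
    rw [hxu, Real.sin_two_mul]
  have hcnn' : 0 ≤ 1 - 2 * Real.sin u ^ 2 := hcos ▸ hcnn
  have ht : u ^ 2 ≤ 1 / 4 := by nlinarith
  have hpos : 0 ≤ u - u ^ 3 / 4 := by nlinarith [mul_le_mul_of_nonneg_left ht hu0.le]
  have hs2 : (u - u ^ 3 / 4) ^ 2 ≤ Real.sin u ^ 2 :=
    pow_le_pow_left₀ hpos hs.le 2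
  have h3 : 2 * u ^ 2 / 3 ≤ (u - u ^ 3 / 4) ^ 2 := by nlinarith [sq_nonneg u, sq_nonneg (u ^ 2)]
  rw [hsin, hxu, hcos]
  nlinarith [mul_le_mul_of_nonneg_right hsx hcnn',
    mul_le_mul_of_nonneg_left (h3.trans hs2) hu0.le]

theorem stmt_7 (z : ℝ) :
    (|z| ≤ 2 → |sinc z| ≤ 1 - z ^ 2 / 12) ∧ (|z| > 2 → |sinc z| ≤ 1 / 2) := by
  constructor
  · intro hz
    rcases eq_or_ne z 0 with h0 | h0
    · simp [sinc, h0]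
    · have hz0 : |z| ≠ 0 := abs_ne_zero.mpr h0
      have hzpos : 0 < |z| := abs_pos.mpr h0
      have key : Real.sin |z| ≤ |z| - |z| ^ 3 / 12 := sin_le_key hzpos hz
      have hsnn : 0 ≤ Real.sin |z| :=
        Real.sin_nonneg_of_nonneg_of_le_pi hzpos.le (by linarith [Real.pi_gt_three])
      have hsabs : |Real.sin z| = Real.sin |z| := by
        rcases abs_cases z with ⟨h1, _⟩ | ⟨h1, _⟩
        · rw [h1] at hsnn ⊢; exact abs_of_nonneg hsnn
        · rw [h1] at hsnn ⊢; rw [Real.sin_neg] at hsnn ⊢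
          exact abs_of_nonpos (by linarith)
      have habs : |sinc z| = Real.sin |z| / |z| := by
        rw [sinc, if_neg h0, abs_div, hsabs]
      rw [habs, div_le_iff₀ hzpos]
      have hzsq : |z| ^ 2 = z ^ 2 := sq_abs z
      nlinarith
  · intro hz
    have h0 : z ≠ 0 := by intro h; rw [h] at hz; simp at hz; linarith
    rw [sinc, if_neg h0, abs_div]
    rw [div_le_iff₀ (by linarith : (0:ℝ) < |z|)]
    have := Real.abs_sin_le_one z
    nlinarith
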